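/- Let G be a countable directed graph and Φ_0 : 𝔏_G → ℓ^∞(V) the canonical expectation reading off the diagonal Fourier coefficients (Φ_0(T)_v = ⟨T ξ_v, ξ_v⟩), which is a unital homomorphism. If Q ∈ 𝔏_G is an idempotent with Φ_0(Q) = 0, then Q = 0. Consequently every nonzero idempotent P ∈ 𝔏_G is finite: if Q is an idempotent with PQ = QP = Q which is algebraically equivalent to P (there exist A, B ∈ 𝔏_G with AB = P, BA = Q), then Q = P. -/

import Mathlib

set_option linter.unusedSectionVars false
set_option maxHeartbeats 1000000

open scoped InnerProductSpace


structure DirectedGraph where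
  V : Type
  E : Type
  src : E → V
  rng : E → V

namespace DirectedGraph

/-- Two edges are composable (as in `e₂ e₁`, `e₂` after `e₁`) when `s(e₂) = r(e₁)`. -/
def Composable (G : DirectedGraph) (a b : G.E) : Prop := G.src a = G.rng b

/-- A list `[eₙ, …, e₁]` of edges is a path when consecutive edges are composable. -/
def IsPathList (G : DirectedGraph) (μ : List G.E) : Prop := List.Chain' G.Composable μ

/-- The path `μ` has source `v` (vacuous for the empty path). -/
def SrcIs (G : DirectedGraph) (μ : List G.E) (v : G.V) : Prop :=
  ∀ e ∈ μ.getLast?, G.src e = v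

/-- The path `μ`, regarded as a path with source `v`, has range `w`. -/
def RngIs (G : DirectedGraph) (v : G.V) (μ : List G.E) (w : G.V) : Prop :=
  match μ with
  | [] => v = w
  | e :: _ => G.rng e = w

/-- `μ` is a path with source `v`. -/
def IsPathAt (G : DirectedGraph) (v : G.V) (μ : List G.E) : Prop :=
  G.IsPathList μ ∧ G.SrcIs μ v

/-- `μ` is a cycle at `v` : a path with source and range `v`. -/
def IsCycleAt (G : DirectedGraph) (v : G.V) (μ : List G.E) : Prop :=
  G.IsPathAt v μ ∧ G.RngIs v μ v

end DirectedGraph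

/-- The closure of a set of operators in the weak operator topology, described
via the basic WOT neighbourhoods. -/
def wotClosure {H : Type} [NormedAddCommGroup H] [InnerProductSpace ℂ H]
    (A : Set (H →L[ℂ] H)) : Set (H →L[ℂ] H) :=
  {T | ∀ (F : Finset (H × H)) (ε : ℝ), 0 < ε →
    ∃ X ∈ A, ∀ p ∈ F, ‖(@inner ℂ H _ ((T - X) p.1) p.2)‖ < ε}

/-- Source-annotated finite paths of `G`, the index set of the standard
orthonormal basis of the Fock space `H_G = ℓ²(F⁺_G)`. -/
def PathIdx (G : DirectedGraph) : Type := {p : G.V × List G.E // G.IsPathAt p.1 p.2}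

/-- The operator of a path for a family `(Lv, Le)`: products of edge operators,
with the empty path at `v` giving `Lv v`. -/
noncomputable def pathOpL {G : DirectedGraph} {H : Type} [NormedAddCommGroup H]
    [InnerProductSpace ℂ H] [CompleteSpace H]
    (Lv : G.V → H →L[ℂ] H) (Le : G.E → H →L[ℂ] H) (v : G.V) (μ : List G.E) :
    H →L[ℂ] H :=
  match μ with
  | [] => Lv v
  | e :: rest => ((e :: rest).map Le).prod

/-- The left regular free semigroupoid algebra `𝔏_G`: the WOT-closed span of the
path operators. -/
noncomputable def leftRegAlg {G : DirectedGraph} {H : Type} [NormedAddCommGroup H]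
    [InnerProductSpace ℂ H] [CompleteSpace H]
    (Lv : G.V → H →L[ℂ] H) (Le : G.E → H →L[ℂ] H) : Set (H →L[ℂ] H) :=
  wotClosure (↑(Submodule.span ℂ
    {T : H →L[ℂ] H | ∃ q : PathIdx G, T = pathOpL Lv Le q.1.1 q.1.2}))

section Aux
open scoped InnerProductSpace
variable {G : DirectedGraph}

def DirectedGraph.rngOf (G : DirectedGraph) (v : G.V) (μ : List G.E) : G.V :=
  match μ with
  | [] => v
  | e :: _ => G.rng e

lemma rngIs_rngOf (G : DirectedGraph) (v : G.V) (μ : List G.E) :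
    G.RngIs v μ (G.rngOf v μ) := by cases μ <;> rfl

lemma rngIs_unique {G : DirectedGraph} {v w w' : G.V} {μ : List G.E}
    (h : G.RngIs v μ w) (h' : G.RngIs v μ w') : w = w' := by
  cases μ with
  | nil => exact h.symm.trans h'
  | cons e t => exact h.symm.trans h'

lemma isPathAt_nil (G : DirectedGraph) (v : G.V) : G.IsPathAt v [] :=
  ⟨List.isChain_nil, fun e he => by simp at he⟩

def basePt (q : PathIdx G) : PathIdx G := ⟨(q.1.1, []), isPathAt_nil G q.1.1⟩

lemma pa_append (p r : PathIdx G) (hr : G.RngIs p.1.1 p.1.2 r.1.1) :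
    G.IsPathAt p.1.1 (r.1.2 ++ p.1.2) := by
  constructor
  · rw [DirectedGraph.IsPathList, List.Chain', List.isChain_append]
    refine ⟨r.2.1, p.2.1, fun x hx y hy => ?_⟩
    have hsx : G.src x = r.1.1 := r.2.2 x hx
    cases hμ : p.1.2 with
    | nil => rw [hμ] at hy; simp at hy
    | cons f t =>
      rw [hμ] at hy; simp at hy
      subst hy
      rw [hμ] at hr
      exact hsx.trans hr.symm
  · intro e he
    cases hμ : p.1.2 with
    | nil =>
      rw [hμ, List.append_nil] at he
      have := r.2.2 e he
      rw [hμ] at hr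
      exact this.trans hr.symm
    | cons f t =>
      rw [hμ] at he
      rw [List.getLast?_append_of_ne_nil _ (by simp)] at he
      have := p.2.2 e
      rw [hμ] at this
      exact this he

lemma cons_path_iff (p : PathIdx G) (e : G.E) :
    G.IsPathAt p.1.1 (e :: p.1.2) ↔ G.RngIs p.1.1 p.1.2 (G.src e) := by
  constructor
  · intro h
    cases hμ : p.1.2 with
    | nil =>
      rw [DirectedGraph.RngIs]
      have := h.2 e
      rw [hμ] at this
      exact (this (by simp)).symm
    | cons f t =>
      rw [DirectedGraph.RngIs]
      have := h.1
      rw [hμ, DirectedGraph.IsPathList, List.Chain', List.isChain_cons_cons] at this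
      exact this.1.symm
  · intro h
    have : G.IsPathAt p.1.1 ([e] ++ p.1.2) :=
      pa_append p ⟨(G.src e, [e]), ⟨List.isChain_singleton e, fun x hx => by
        simp at hx; subst hx; rfl⟩⟩ h
    simpa using this

lemma isPathAt_of_cons {v : G.V} {e : G.E} {l : List G.E} (hl : l ≠ [])
    (h : G.IsPathAt v (e :: l)) : G.IsPathAt v l := by
  refine ⟨h.1.tail, fun x hx => h.2 x ?_⟩
  show x ∈ ([e] ++ l).getLast?
  rw [List.getLast?_append_of_ne_nil _ hl]
  exact hx

end Aux

section Op
open scoped InnerProductSpace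
open Classical
variable {H : Type} [NormedAddCommGroup H] [InnerProductSpace ℂ H] [CompleteSpace H]
variable {ξ : PathIdx G → H} {Lv : G.V → H →L[ℂ] H} {Le : G.E → H →L[ℂ] H}

lemma mid_path (p : PathIdx G) (l : List G.E) (h : G.IsPathAt p.1.1 (l ++ p.1.2)) :
    G.IsPathAt (G.rngOf p.1.1 p.1.2) l := by
  refine ⟨(List.isChain_append.mp h.1).1, fun x hx => ?_⟩
  cases hμ : p.1.2 with
  | nil =>
    have h2 := h.2
    rw [hμ, List.append_nil] at h2
    simp only [hμ, DirectedGraph.rngOf]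
    exact h2 x hx
  | cons f t =>
    have hj := (List.isChain_append.mp h.1).2.2 x hx f (by rw [hμ]; simp)
    simp only [hμ, DirectedGraph.rngOf]
    exact hj

lemma le_apply
    (hLe_eq : ∀ (e : G.E) (p q : PathIdx G), G.RngIs p.1.1 p.1.2 (G.src e) →
      q.1.1 = p.1.1 → q.1.2 = e :: p.1.2 → Le e (ξ p) = ξ q)
    (hLe_ne : ∀ (e : G.E) (p : PathIdx G), ¬ G.RngIs p.1.1 p.1.2 (G.src e) →
      Le e (ξ p) = 0) (e : G.E) (p : PathIdx G) :
    Le e (ξ p) =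
      if h : G.IsPathAt p.1.1 (e :: p.1.2) then ξ ⟨(p.1.1, e :: p.1.2), h⟩ else 0 := by
  by_cases h : G.RngIs p.1.1 p.1.2 (G.src e)
  · have hq := (cons_path_iff p e).mpr h
    rw [dif_pos hq]
    exact hLe_eq e p ⟨(p.1.1, e :: p.1.2), hq⟩ h rfl rfl
  · rw [dif_neg (fun hh => h ((cons_path_iff p e).mp hh))]
    exact hLe_ne e p h

lemma prod_apply'
    (hLe_eq : ∀ (e : G.E) (p q : PathIdx G), G.RngIs p.1.1 p.1.2 (G.src e) →
      q.1.1 = p.1.1 → q.1.2 = e :: p.1.2 → Le e (ξ p) = ξ q)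
    (hLe_ne : ∀ (e : G.E) (p : PathIdx G), ¬ G.RngIs p.1.1 p.1.2 (G.src e) →
      Le e (ξ p) = 0) :
    ∀ (l : List G.E), l ≠ [] → ∀ (p : PathIdx G),
    ((l.map Le).prod) (ξ p) =
      if h : G.IsPathAt p.1.1 (l ++ p.1.2) then ξ ⟨(p.1.1, l ++ p.1.2), h⟩ else 0 := by
  intro l
  induction l with
  | nil => intro h; exact absurd rfl h
  | cons e rest ih =>
    intro _ p
    cases rest with
    | nil =>
      simp only [List.singleton_append, List.map_cons, List.map_nil, List.prod_cons,
        List.prod_nil, mul_one]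
      exact le_apply hLe_eq hLe_ne e p
    | cons f t =>
      have hrec := ih (by simp) p
      have hstep : (((e :: f :: t).map Le).prod) (ξ p)
          = Le e ((((f :: t).map Le).prod) (ξ p)) := by
        simp [List.prod_cons, ContinuousLinearMap.mul_apply]
      rw [hstep, hrec]
      by_cases h1 : G.IsPathAt p.1.1 ((f :: t) ++ p.1.2)
      · rw [dif_pos h1, le_apply hLe_eq hLe_ne e ⟨(p.1.1, (f :: t) ++ p.1.2), h1⟩]
        split_ifs with ha hb hb
        · rfl
        · exact absurd ha hb
        · exact absurd hb ha
        · rfl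
      · rw [dif_neg h1, map_zero,
          dif_neg (show ¬ G.IsPathAt p.1.1 ((e :: f :: t) ++ p.1.2) from
            fun hh => h1 (isPathAt_of_cons (by simp) hh))]


lemma srcIs_unique {l : List G.E} (hl : l ≠ []) {u u' : G.V}
    (h : G.SrcIs l u) (h' : G.SrcIs l u') : u = u' := by
  have hx : l.getLast hl ∈ l.getLast? := by
    simp [List.getLast?_eq_getLast hl, Option.mem_def]
  exact (h _ hx).symm.trans (h' _ hx)

lemma gen_entry (hON : Orthonormal ℂ ξ)
    (hLv_eq : ∀ (v : G.V) (p : PathIdx G), G.RngIs p.1.1 p.1.2 v → Lv v (ξ p) = ξ p)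
    (hLv_ne : ∀ (v : G.V) (p : PathIdx G), ¬ G.RngIs p.1.1 p.1.2 v → Lv v (ξ p) = 0)
    (hLe_eq : ∀ (e : G.E) (p q : PathIdx G), G.RngIs p.1.1 p.1.2 (G.src e) →
      q.1.1 = p.1.1 → q.1.2 = e :: p.1.2 → Le e (ξ p) = ξ q)
    (hLe_ne : ∀ (e : G.E) (p : PathIdx G), ¬ G.RngIs p.1.1 p.1.2 (G.src e) →
      Le e (ξ p) = 0)
    (p q w : PathIdx G) :
    ⟪pathOpL Lv Le w.1.1 w.1.2 (ξ p), ξ q⟫_ℂ =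
      if q.1.1 = p.1.1 ∧ q.1.2 = w.1.2 ++ p.1.2 ∧ G.RngIs p.1.1 p.1.2 w.1.1
      then 1 else 0 := by
  have hinner := orthonormal_iff_ite.mp hON
  cases hw : w.1.2 with
  | nil =>
    show ⟪Lv w.1.1 (ξ p), ξ q⟫_ℂ = _
    by_cases hr : G.RngIs p.1.1 p.1.2 w.1.1
    · rw [hLv_eq _ p hr, hinner p q]
      by_cases hpq : p = q
      · rw [if_pos hpq, if_pos ⟨by rw [hpq], by rw [hpq]; simp, hr⟩]
      · rw [if_neg hpq, if_neg (fun hC => hpq (Subtype.ext (Prod.ext_iff.mpr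
          ⟨hC.1.symm, by rw [hC.2.1]; simp⟩)))]
    · rw [hLv_ne _ p hr, inner_zero_left, if_neg (fun hC => hr hC.2.2)]
  | cons e t =>
    show ⟪((e :: t).map Le).prod (ξ p), ξ q⟫_ℂ = _
    rw [prod_apply' hLe_eq hLe_ne (e :: t) (by simp) p]
    by_cases h1 : G.IsPathAt p.1.1 ((e :: t) ++ p.1.2)
    · rw [dif_pos h1]
      refine (hinner _ q).trans ?_
      refine if_congr ?_ rfl rfl
      constructor
      · intro hA
        have hq1 : q.1.1 = p.1.1 := by rw [← hA]
        have hq2 : q.1.2 = (e :: t) ++ p.1.2 := by rw [← hA]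
        refine ⟨hq1, hq2, ?_⟩
        have hs1 : G.SrcIs (e :: t) (G.rngOf p.1.1 p.1.2) := (mid_path p (e :: t) h1).2
        have hs2 : G.SrcIs (e :: t) w.1.1 := by
          have := w.2.2
          rw [hw] at this
          exact this
        have hww : w.1.1 = G.rngOf p.1.1 p.1.2 := srcIs_unique (by simp) hs2 hs1
        rw [hww]
        exact rngIs_rngOf G p.1.1 p.1.2
      · rintro ⟨hq1, hq2, hq3⟩
        refine Subtype.ext (Prod.ext_iff.mpr ⟨hq1.symm, hq2.symm⟩)
    · rw [dif_neg h1, inner_zero_left, if_neg ?_]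
      rintro ⟨hq1, hq2, hq3⟩
      have := pa_append p w hq3
      rw [hw] at this
      exact h1 this

lemma wot_entry_eq {A : Set (H →L[ℂ] H)} {T : H →L[ℂ] H}
    (hT : T ∈ {T | ∀ (F : Finset (H × H)) (ε : ℝ), 0 < ε →
      ∃ X ∈ A, ∀ pr ∈ F, ‖(⟪(T - X) pr.1, pr.2⟫_ℂ)‖ < ε})
    {a b c d : H} (h : ∀ X ∈ A, ⟪X a, b⟫_ℂ = ⟪X c, d⟫_ℂ) :
    ⟪T a, b⟫_ℂ = ⟪T c, d⟫_ℂ := by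
  rw [← sub_eq_zero]
  by_contra hne
  have hpos : 0 < ‖⟪T a, b⟫_ℂ - ⟪T c, d⟫_ℂ‖ := norm_pos_iff.mpr hne
  obtain ⟨X, hXA, hX⟩ := hT {(a, b), (c, d)} (‖⟪T a, b⟫_ℂ - ⟪T c, d⟫_ℂ‖ / 2)
    (by linarith)
  have h1 := hX (a, b) (by simp)
  have h2 := hX (c, d) (by simp)
  have hz : ⟪T a, b⟫_ℂ - ⟪T c, d⟫_ℂ
      = ⟪(T - X) a, b⟫_ℂ - ⟪(T - X) c, d⟫_ℂ := by
    simp only [ContinuousLinearMap.sub_apply, inner_sub_left, h X hXA]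
    ring
  have hb := norm_sub_le (⟪(T - X) a, b⟫_ℂ) (⟪(T - X) c, d⟫_ℂ)
  rw [← hz] at hb
  simp only at h1 h2
  linarith

lemma span_entry_eq {S : Set (H →L[ℂ] H)} {a b c d : H}
    (h : ∀ X ∈ S, ⟪X a, b⟫_ℂ = ⟪X c, d⟫_ℂ) :
    ∀ X ∈ Submodule.span ℂ S, ⟪X a, b⟫_ℂ = ⟪X c, d⟫_ℂ := by
  intro X hX
  induction hX using Submodule.span_induction with
  | mem x hx => exact h x hx
  | zero => simp
  | add x y hx hy ihx ihy =>
    simp only [ContinuousLinearMap.add_apply, inner_add_left, ihx, ihy]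
  | smul r x hx ihx =>
    simp only [ContinuousLinearMap.smul_apply, inner_smul_left, ihx]


def ExtD (p q r : PathIdx G) : Prop :=
  q.1.1 = p.1.1 ∧ q.1.2 = r.1.2 ++ p.1.2 ∧ G.RngIs p.1.1 p.1.2 r.1.1

lemma key_zero (hON : Orthonormal ℂ ξ)
    (hLv_eq : ∀ (v : G.V) (p : PathIdx G), G.RngIs p.1.1 p.1.2 v → Lv v (ξ p) = ξ p)
    (hLv_ne : ∀ (v : G.V) (p : PathIdx G), ¬ G.RngIs p.1.1 p.1.2 v → Lv v (ξ p) = 0)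
    (hLe_eq : ∀ (e : G.E) (p q : PathIdx G), G.RngIs p.1.1 p.1.2 (G.src e) →
      q.1.1 = p.1.1 → q.1.2 = e :: p.1.2 → Le e (ξ p) = ξ q)
    (hLe_ne : ∀ (e : G.E) (p : PathIdx G), ¬ G.RngIs p.1.1 p.1.2 (G.src e) →
      Le e (ξ p) = 0)
    {T : H →L[ℂ] H} (hT : T ∈ leftRegAlg Lv Le) (p q : PathIdx G)
    (hdec : ¬ ∃ r : PathIdx G, ExtD p q r) :
    ⟪T (ξ p), ξ q⟫_ℂ = 0 := by
  have h0 : ∀ X ∈ Submodule.span ℂ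
      {T : H →L[ℂ] H | ∃ w : PathIdx G, T = pathOpL Lv Le w.1.1 w.1.2},
      ⟪X (ξ p), ξ q⟫_ℂ = ⟪X (0 : H), (0 : H)⟫_ℂ := by
    apply span_entry_eq
    rintro X ⟨w, rfl⟩
    rw [gen_entry hON hLv_eq hLv_ne hLe_eq hLe_ne p q w,
      if_neg (show ¬(q.1.1 = p.1.1 ∧ q.1.2 = w.1.2 ++ p.1.2 ∧
        G.RngIs p.1.1 p.1.2 w.1.1) from fun hC => hdec ⟨w, (hC : ExtD p q w)⟩)]
    simp
  have := wot_entry_eq hT h0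
  simpa using this

lemma key_shift (hON : Orthonormal ℂ ξ)
    (hLv_eq : ∀ (v : G.V) (p : PathIdx G), G.RngIs p.1.1 p.1.2 v → Lv v (ξ p) = ξ p)
    (hLv_ne : ∀ (v : G.V) (p : PathIdx G), ¬ G.RngIs p.1.1 p.1.2 v → Lv v (ξ p) = 0)
    (hLe_eq : ∀ (e : G.E) (p q : PathIdx G), G.RngIs p.1.1 p.1.2 (G.src e) →
      q.1.1 = p.1.1 → q.1.2 = e :: p.1.2 → Le e (ξ p) = ξ q)
    (hLe_ne : ∀ (e : G.E) (p : PathIdx G), ¬ G.RngIs p.1.1 p.1.2 (G.src e) →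
      Le e (ξ p) = 0)
    {T : H →L[ℂ] H} (hT : T ∈ leftRegAlg Lv Le) (p q r : PathIdx G)
    (hext : ExtD p q r) :
    ⟪T (ξ p), ξ q⟫_ℂ = ⟪T (ξ (basePt r)), ξ r⟫_ℂ := by
  obtain ⟨h1, h2, h3⟩ := hext
  have h0 : ∀ X ∈ Submodule.span ℂ
      {T : H →L[ℂ] H | ∃ w : PathIdx G, T = pathOpL Lv Le w.1.1 w.1.2},
      ⟪X (ξ p), ξ q⟫_ℂ = ⟪X (ξ (basePt r)), ξ r⟫_ℂ := by
    apply span_entry_eq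
    rintro X ⟨w, rfl⟩
    rw [gen_entry hON hLv_eq hLv_ne hLe_eq hLe_ne p q w,
      gen_entry hON hLv_eq hLv_ne hLe_eq hLe_ne (basePt r) r w]
    refine if_congr ?_ rfl rfl
    constructor
    · rintro ⟨ha, hb, hc⟩
      have hrw : w.1.1 = r.1.1 := rngIs_unique hc h3
      refine ⟨rfl, ?_, ?_⟩
      · have : r.1.2 ++ p.1.2 = w.1.2 ++ p.1.2 := by
          rw [← h2, hb]
        have hlist : r.1.2 = w.1.2 := (List.append_left_inj _).mp this
        show r.1.2 = w.1.2 ++ ([] : List G.E)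
        rw [List.append_nil]
        exact hlist
      · show G.RngIs r.1.1 ([] : List G.E) w.1.1
        exact hrw.symm
    · rintro ⟨_, hb, hc⟩
      have hrw : r.1.1 = w.1.1 := hc
      have hlist : r.1.2 = w.1.2 := by
        have hb' : r.1.2 = w.1.2 ++ ([] : List G.E) := hb
        rwa [List.append_nil] at hb'
      refine ⟨h1, ?_, ?_⟩
      · rw [h2, hlist]
      · rw [← hrw]
        exact h3
  exact wot_entry_eq hT h0

lemma wot_sub {A : Submodule ℂ (H →L[ℂ] H)} {T S : H →L[ℂ] H}
    (hT : T ∈ wotClosure (A : Set (H →L[ℂ] H)))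
    (hS : S ∈ wotClosure (A : Set (H →L[ℂ] H))) :
    T - S ∈ wotClosure (A : Set (H →L[ℂ] H)) := by
  intro F ε hε
  obtain ⟨X, hXA, hX⟩ := hT F (ε / 2) (by linarith)
  obtain ⟨Y, hYA, hY⟩ := hS F (ε / 2) (by linarith)
  refine ⟨X - Y, sub_mem hXA hYA, fun pr hpr => ?_⟩
  have hv : (T - S - (X - Y)) pr.1 = (T - X) pr.1 - (S - Y) pr.1 := by
    simp only [ContinuousLinearMap.sub_apply]
    abel
  rw [hv, inner_sub_left]
  calc ‖⟪(T - X) pr.1, pr.2⟫_ℂ - ⟪(S - Y) pr.1, pr.2⟫_ℂ‖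
      ≤ ‖⟪(T - X) pr.1, pr.2⟫_ℂ‖ + ‖⟪(S - Y) pr.1, pr.2⟫_ℂ‖ := norm_sub_le _ _
    _ < ε / 2 + ε / 2 := add_lt_add (hX pr hpr) (hY pr hpr)
    _ = ε := by ring

lemma entry_mul (b : HilbertBasis (PathIdx G) ℂ H) (S T : H →L[ℂ] H) (x y : H) :
    ⟪(S * T) x, y⟫_ℂ = ∑' i, ⟪T x, b i⟫_ℂ * ⟪S (b i), y⟫_ℂ := by
  have h1 : ⟪(S * T) x, y⟫_ℂ = ⟪T x, (ContinuousLinearMap.adjoint S) y⟫_ℂ := by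
    rw [ContinuousLinearMap.adjoint_inner_right]
    rfl
  rw [h1, ← b.tsum_inner_mul_inner (T x) ((ContinuousLinearMap.adjoint S) y)]
  exact tsum_congr fun i => by rw [ContinuousLinearMap.adjoint_inner_right]

lemma inner_all_zero
    (htot : (Submodule.span ℂ (Set.range ξ)).topologicalClosure = ⊤)
    {y : H} (hy : ∀ q : PathIdx G, ⟪y, ξ q⟫_ℂ = 0) : y = 0 := by
  have hker : Submodule.span ℂ (Set.range ξ) ≤ (innerSL ℂ y).ker := by
    rw [Submodule.span_le]
    rintro x ⟨q, rfl⟩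
    simpa [LinearMap.mem_ker] using hy q
  have hker2 := Submodule.topologicalClosure_minimal _ hker
    (ContinuousLinearMap.isClosed_ker (innerSL ℂ y))
  rw [htot] at hker2
  have hmem : y ∈ (innerSL ℂ y).ker := hker2 Submodule.mem_top
  have : ⟪y, y⟫_ℂ = 0 := hmem
  exact inner_self_eq_zero.mp this


lemma main_part1 (hON : Orthonormal ℂ ξ)
    (hLv_eq : ∀ (v : G.V) (p : PathIdx G), G.RngIs p.1.1 p.1.2 v → Lv v (ξ p) = ξ p)
    (hLv_ne : ∀ (v : G.V) (p : PathIdx G), ¬ G.RngIs p.1.1 p.1.2 v → Lv v (ξ p) = 0)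
    (hLe_eq : ∀ (e : G.E) (p q : PathIdx G), G.RngIs p.1.1 p.1.2 (G.src e) →
      q.1.1 = p.1.1 → q.1.2 = e :: p.1.2 → Le e (ξ p) = ξ q)
    (hLe_ne : ∀ (e : G.E) (p : PathIdx G), ¬ G.RngIs p.1.1 p.1.2 (G.src e) →
      Le e (ξ p) = 0)
    (htot : (Submodule.span ℂ (Set.range ξ)).topologicalClosure = ⊤)
    (Q : H →L[ℂ] H) (hQ : Q ∈ leftRegAlg Lv Le) (hidem : Q * Q = Q)
    (hdiag : ∀ p : PathIdx G, p.1.2 = [] → ⟪Q (ξ p), ξ p⟫_ℂ = 0) : Q = 0 := by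
  classical
  have hb : ∀ i, (HilbertBasis.mk hON htot.ge : HilbertBasis (PathIdx G) ℂ H) i = ξ i :=
    fun i => congrFun (HilbertBasis.coe_mk hON htot.ge) i
  set b : HilbertBasis (PathIdx G) ℂ H := HilbertBasis.mk hON htot.ge with hbdef
  have coeff : ∀ n : ℕ, ∀ r : PathIdx G, r.1.2.length = n →
      ⟪Q (ξ (basePt r)), ξ r⟫_ℂ = 0 := by
    intro n
    induction n using Nat.strong_induction_on with
    | _ n ih =>
      intro r hr
      cases hnil : r.1.2 with
      | nil =>
        have hbr : basePt r = r := Subtype.ext (Prod.ext_iff.mpr ⟨rfl, hnil.symm⟩)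
        rw [hbr]
        exact hdiag r hnil
      | cons e t =>
        have hexp : ⟪Q (ξ (basePt r)), ξ r⟫_ℂ
            = ∑' i, ⟪Q (ξ (basePt r)), ξ i⟫_ℂ * ⟪Q (ξ i), ξ r⟫_ℂ := by
          conv_lhs => rw [← hidem]
          rw [entry_mul b Q Q (ξ (basePt r)) (ξ r)]
          exact tsum_congr fun i => by rw [hb i]
        rw [hexp]
        have hzero : ∀ i : PathIdx G,
            ⟪Q (ξ (basePt r)), ξ i⟫_ℂ * ⟪Q (ξ i), ξ r⟫_ℂ = 0 := by
          intro i
          by_cases hc1 : ∃ s : PathIdx G, ExtD (basePt r) i s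
          · cases hi2 : i.1.2 with
            | nil =>
              obtain ⟨s, hs1, _, _⟩ := hc1
              have hieq : i = basePt r := Subtype.ext (Prod.ext_iff.mpr ⟨hs1, hi2⟩)
              rw [hieq, hdiag (basePt r) rfl, zero_mul]
            | cons f u =>
              by_cases hc2 : ∃ w : PathIdx G, ExtD i r w
              · obtain ⟨w, hw1, hw2, hw3⟩ := hc2
                rw [key_shift hON hLv_eq hLv_ne hLe_eq hLe_ne hQ i r w ⟨hw1, hw2, hw3⟩]
                have hlen : w.1.2.length < n := by
                  have hL := congrArg List.length hw2
                  rw [List.length_append, hi2, List.length_cons, hr] at hL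
                  omega
                rw [ih w.1.2.length hlen w rfl, mul_zero]
              · rw [key_zero hON hLv_eq hLv_ne hLe_eq hLe_ne hQ i r hc2, mul_zero]
          · rw [key_zero hON hLv_eq hLv_ne hLe_eq hLe_ne hQ (basePt r) i hc1, zero_mul]
        calc (∑' i, ⟪Q (ξ (basePt r)), ξ i⟫_ℂ * ⟪Q (ξ i), ξ r⟫_ℂ)
            = ∑' _ : PathIdx G, (0 : ℂ) := tsum_congr hzero
          _ = 0 := tsum_zero
  have entries : ∀ p q2 : PathIdx G, ⟪Q (ξ p), ξ q2⟫_ℂ = 0 := by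
    intro p q2
    by_cases hc : ∃ r, ExtD p q2 r
    · obtain ⟨r, hr⟩ := hc
      rw [key_shift hON hLv_eq hLv_ne hLe_eq hLe_ne hQ p q2 r hr]
      exact coeff r.1.2.length r rfl
    · exact key_zero hON hLv_eq hLv_ne hLe_eq hLe_ne hQ p q2 hc
  have hxz : ∀ p : PathIdx G, Q (ξ p) = 0 := fun p =>
    inner_all_zero htot (fun q2 => entries p q2)
  have hker : Submodule.span ℂ (Set.range ξ) ≤ Q.ker := by
    rw [Submodule.span_le]
    rintro x ⟨p, rfl⟩
    simpa [LinearMap.mem_ker] using hxz p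
  have hker2 := Submodule.topologicalClosure_minimal _ hker
    (ContinuousLinearMap.isClosed_ker Q)
  rw [htot] at hker2
  ext x
  exact hker2 Submodule.mem_top

end Op

/-- Realize `𝔏_G` on a Hilbert space with orthonormal basis
`{ξ_μ}` indexed by the paths of `G`, where `L_v ξ_μ = ξ_μ` if `r(μ) = v` (else `0`)
and `L_e ξ_μ = ξ_{eμ}` if `r(μ) = s(e)` (else `0`).  If `Q ∈ 𝔏_G` is an idempotent
whose diagonal vertex Fourier coefficients `⟨Q ξ_v, ξ_v⟩` all vanish, then `Q = 0`.
Consequently every nonzero idempotent `P ∈ 𝔏_G` is finite: if `Q ∈ 𝔏_G` is an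
idempotent with `PQ = QP = Q` which is algebraically equivalent to `P`
(`AB = P`, `BA = Q` with `A, B ∈ 𝔏_G`), then `Q = P`. -/
theorem stmt10 (G : DirectedGraph) {H : Type} [NormedAddCommGroup H]
    [InnerProductSpace ℂ H] [CompleteSpace H]
    (ξ : PathIdx G → H) (hON : Orthonormal ℂ ξ)
    (htot : (Submodule.span ℂ (Set.range ξ)).topologicalClosure = ⊤)
    (Lv : G.V → H →L[ℂ] H) (Le : G.E → H →L[ℂ] H)
    (hLv_eq : ∀ (v : G.V) (p : PathIdx G), G.RngIs p.1.1 p.1.2 v → Lv v (ξ p) = ξ p)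
    (hLv_ne : ∀ (v : G.V) (p : PathIdx G), ¬ G.RngIs p.1.1 p.1.2 v → Lv v (ξ p) = 0)
    (hLe_eq : ∀ (e : G.E) (p q : PathIdx G), G.RngIs p.1.1 p.1.2 (G.src e) →
      q.1.1 = p.1.1 → q.1.2 = e :: p.1.2 → Le e (ξ p) = ξ q)
    (hLe_ne : ∀ (e : G.E) (p : PathIdx G), ¬ G.RngIs p.1.1 p.1.2 (G.src e) →
      Le e (ξ p) = 0) :
    (∀ Q ∈ leftRegAlg Lv Le, Q * Q = Q →
      (∀ p : PathIdx G, p.1.2 = [] → (@inner ℂ H _ (Q (ξ p)) (ξ p)) = 0) → Q = 0) ∧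
    (∀ P Q A B : H →L[ℂ] H, P ∈ leftRegAlg Lv Le → Q ∈ leftRegAlg Lv Le →
      A ∈ leftRegAlg Lv Le → B ∈ leftRegAlg Lv Le →
      P ≠ 0 → P * P = P → Q * Q = Q → P * Q = Q → Q * P = Q →
      A * B = P → B * A = Q → Q = P) := by
    classical
  constructor
  · intro Q hQ hidem hdiag
    exact main_part1 hON hLv_eq hLv_ne hLe_eq hLe_ne htot Q hQ hidem hdiag
  · intro P Q A B hP hQ hA hB _ hPP hQQ hPQ hQP hAB hBA
    have hb : ∀ i, (HilbertBasis.mk hON htot.ge : HilbertBasis (PathIdx G) ℂ H) i = ξ i :=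
      fun i => congrFun (HilbertBasis.coe_mk hON htot.ge) i
    set b : HilbertBasis (PathIdx G) ℂ H := HilbertBasis.mk hON htot.ge with hbdef
    have hsub : P - Q ∈ leftRegAlg Lv Le := wot_sub hP hQ
    have hidem2 : (P - Q) * (P - Q) = P - Q := by
      rw [sub_mul, mul_sub, mul_sub, hPP, hQQ, hPQ, hQP]
      simp
    have hdiag : ∀ p : PathIdx G, p.1.2 = [] → ⟪(P - Q) (ξ p), ξ p⟫_ℂ = 0 := by
      intro p hp
      have keyA : ∀ (S T : H →L[ℂ] H), S ∈ leftRegAlg Lv Le →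
          ⟪(S * T) (ξ p), ξ p⟫_ℂ = ⟪T (ξ p), ξ p⟫_ℂ * ⟪S (ξ p), ξ p⟫_ℂ := by
        intro S T hS
        rw [entry_mul b S T (ξ p) (ξ p)]
        simp only [hb]
        rw [tsum_eq_single p ?_]
        intro i hip
        have hz : ¬ ∃ w : PathIdx G, ExtD i p w := by
          rintro ⟨w, hw1, hw2, hw3⟩
          rw [hp] at hw2
          have hwi := List.append_eq_nil_iff.mp hw2.symm
          exact hip (Subtype.ext (Prod.ext_iff.mpr ⟨hw1.symm, by rw [hwi.2, hp]⟩))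
        rw [key_zero hON hLv_eq hLv_ne hLe_eq hLe_ne hS i p hz, mul_zero]
      have h1 : ⟪P (ξ p), ξ p⟫_ℂ = ⟪Q (ξ p), ξ p⟫_ℂ := by
        rw [← hAB, ← hBA, keyA A B hA, keyA B A hB, mul_comm]
      rw [ContinuousLinearMap.sub_apply, inner_sub_left, h1, sub_self]
    have hz := main_part1 hON hLv_eq hLv_ne hLe_eq hLe_ne htot (P - Q) hsub hidem2 hdiag
    exact (sub_eq_zero.mp hz).symm
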